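/- Let the operator S: ℝ^{3×3} → ℝ^{3×3}_sym, derived from the potential U (i.e. S = ∂U), have (p,δ)-structure for some p ∈ (1,2] and δ > 0, with characteristics (γ₃,γ₄,p). For A ≥ 1 let S^A := ∂(U^A) be the operator derived from the A-approximation U^A. Then there is a constant c depending only on γ₃, γ₄ and p such that |S^A(P)| ≤ c·δ^{p−2}·|P^sym| for all P ∈ ℝ^{3×3}. -/

import Mathlib

open Real Set MeasureTheory Filter Matrix

noncomputable section

/-- The N-function `omega_{p,delta}(t) = int_0^t (delta+s)^(p-2) s ds`. -/
def omg (p δ : ℝ) (t : ℝ) : ℝ := ∫ s in (0:ℝ)..t, (δ + s) ^ (p - 2) * s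

/-- The `A`-approximation of a function `φ`: it equals `φ` on `[0,A]` and is the
second-order Taylor polynomial of `φ` at `A` for `t > A`. -/
def approxA (φ : ℝ → ℝ) (A : ℝ) (t : ℝ) : ℝ :=
  if t ≤ A then φ t
  else (1/2) * deriv (deriv φ) A * t ^ 2 + (deriv φ A - deriv (deriv φ) A * A) * t
    + (φ A - deriv φ A * A + (1/2) * deriv (deriv φ) A * A ^ 2)

/-- `φ` is a regular N-function: continuous, convex, positive for `t > 0`,
`φ(t)/t → 0` as `t → 0⁺`, `φ(t)/t → ∞` as `t → ∞`, `C¹` on `[0,∞)`, `C²` on `(0,∞)`,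
with `φ'' > 0` on `(0,∞)`. -/
structure IsRegularNFunction (φ : ℝ → ℝ) : Prop where
  continuousOn : ContinuousOn φ (Set.Ici 0)
  convexOn : ConvexOn ℝ (Set.Ici 0) φ
  pos : ∀ t : ℝ, 0 < t → 0 < φ t
  tendsto_zero : Filter.Tendsto (fun t => φ t / t) (nhdsWithin 0 (Set.Ioi 0)) (nhds 0)
  tendsto_atTop : Filter.Tendsto (fun t => φ t / t) Filter.atTop Filter.atTop
  diffAt : ∀ t : ℝ, 0 < t → DifferentiableAt ℝ φ t
  deriv_continuousOn : ContinuousOn (deriv φ) (Set.Ici 0)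
  diffAt2 : ∀ t : ℝ, 0 < t → DifferentiableAt ℝ (deriv φ) t
  deriv2_continuousOn : ContinuousOn (deriv (deriv φ)) (Set.Ioi 0)
  deriv2_pos : ∀ t : ℝ, 0 < t → 0 < deriv (deriv φ) t

/-- `φ` is a balanced N-function with characteristics `(γ₁, γ₂)`:
`γ₁ φ'(t) ≤ t φ''(t) ≤ γ₂ φ'(t)` for all `t > 0`. -/
structure IsBalanced (φ : ℝ → ℝ) (γ₁ γ₂ : ℝ) : Prop where
  regular : IsRegularNFunction φ
  gamma1_mem : γ₁ ∈ Set.Ioc (0:ℝ) 1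
  gamma2_ge : 1 ≤ γ₂
  lower : ∀ t : ℝ, 0 < t → γ₁ * deriv φ t ≤ t * deriv (deriv φ) t
  upper : ∀ t : ℝ, 0 < t → t * deriv (deriv φ) t ≤ γ₂ * deriv φ t

/-- `ψ` satisfies the Δ₂-condition with constant `K`. -/
def SatisfiesDelta2 (ψ : ℝ → ℝ) (K : ℝ) : Prop :=
  2 ≤ K ∧ ∀ t : ℝ, 0 ≤ t → ψ (2 * t) ≤ K * ψ t

/-- The complementary N-function `φ*(t) = ∫₀ᵗ (φ')⁻¹(s) ds`, where `(φ')⁻¹` is the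
inverse on `[0,∞)` of the (strictly increasing) derivative `φ'`. -/
def conj (φ : ℝ → ℝ) (t : ℝ) : ℝ :=
  ∫ s in (0:ℝ)..t, Function.invFunOn (deriv φ) (Set.Ici 0) s

abbrev Mat3 := Matrix (Fin 3) (Fin 3) ℝ

/-- The symmetric part `P^sym = (P + Pᵀ)/2`. -/
def symPart (P : Mat3) : Mat3 := (2:ℝ)⁻¹ • (P + Pᵀ)

/-- Frobenius norm of a 3×3 matrix. -/
def frob (P : Mat3) : ℝ := Real.sqrt (∑ i, ∑ j, (P i j) ^ 2)

/-- Scalar product of matrices `P·Q = Σ_{ij} P_{ij} Q_{ij}`. -/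
def dot3 (P Q : Mat3) : ℝ := ∑ i, ∑ j, P i j * Q i j

attribute [local instance] Matrix.frobeniusNormedAddCommGroup Matrix.frobeniusNormedSpace

/-- `U` is an admissible potential: `U ∈ C¹([0,∞)) ∩ C²((0,∞))` with `U(0) = U'(0) = 0`. -/
structure IsPotential (U : ℝ → ℝ) : Prop where
  continuousOn : ContinuousOn U (Set.Ici 0)
  diffAt : ∀ t : ℝ, 0 < t → DifferentiableAt ℝ U t
  deriv_continuousOn : ContinuousOn (deriv U) (Set.Ici 0)
  diffAt2 : ∀ t : ℝ, 0 < t → DifferentiableAt ℝ (deriv U) t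
  deriv2_continuousOn : ContinuousOn (deriv (deriv U)) (Set.Ioi 0)
  zero : U 0 = 0
  deriv_zero : deriv U 0 = 0

/-- `S` is derived from the potential `U`, i.e. `S = ∂U`:
`S(0) = 0` and `S(P) = (U'(|P^sym|)/|P^sym|) P^sym`.  (When `P^sym = 0` the right-hand
side is `0` since it is a scalar multiple of the zero matrix.) -/
def DerivedFrom (S : Mat3 → Mat3) (U : ℝ → ℝ) : Prop :=
  S 0 = 0 ∧ ∀ P : Mat3,
    S P = (deriv U (frob (symPart P)) / frob (symPart P)) • symPart P

/-- The operator derived from the potential `U^A` (the `A`-approximation of `U`),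
i.e. `S^A = ∂(U^A)`. -/
def SAop (U : ℝ → ℝ) (A : ℝ) (P : Mat3) : Mat3 :=
  (deriv (approxA U A) (frob (symPart P)) / frob (symPart P)) • symPart P

/-- `S` has `(p,δ)`-structure with characteristics `(γ₃, γ₄, p)`. -/
structure HasPDeltaStructure (S : Mat3 → Mat3) (p δ γ₃ γ₄ : ℝ) : Prop where
  gamma3_mem : γ₃ ∈ Set.Ioc (0:ℝ) 1
  gamma4_gt : 1 < γ₄
  sym_dep : ∀ P : Mat3, S P = S (symPart P)
  sym_val : ∀ P : Mat3, (S P)ᵀ = S P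
  zero : S 0 = 0
  cont : Continuous S
  smooth : ContDiffOn ℝ 1 S {P : Mat3 | P ≠ 0}
  coercive : ∀ P Q : Mat3, symPart P ≠ 0 →
    γ₃ * (δ + frob (symPart P)) ^ (p - 2) * frob (symPart Q) ^ 2 ≤
      ∑ i, ∑ j, ∑ k, ∑ l,
        fderiv ℝ S P (Matrix.single k l 1) i j * Q i j * Q k l
  bounded : ∀ P : Mat3, symPart P ≠ 0 → ∀ i j k l : Fin 3,
    |fderiv ℝ S P (Matrix.single k l 1) i j| ≤ γ₄ * (δ + frob (symPart P)) ^ (p - 2)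

namespace Stmt9Aux

/-- The elementary symmetric matrix `E = stdBasisMatrix 0 0 1`. -/
def Ee : Mat3 := Matrix.single (0 : Fin 3) (0 : Fin 3) (1 : ℝ)

lemma Ee_transpose : Eeᵀ = Ee := by
  ext i j
  simp [Ee, Matrix.transpose_apply, Matrix.single, and_comm]

lemma Ee_apply_00 : Ee 0 0 = 1 := by simp [Ee]

lemma symPart_smul_Ee (r : ℝ) : symPart (r • Ee) = r • Ee := by
  rw [symPart, Matrix.transpose_smul, Ee_transpose, ← two_smul ℝ (r • Ee), smul_smul]
  norm_num

lemma frob_smul (r : ℝ) (M : Mat3) : frob (r • M) = |r| * frob M := by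
  unfold frob
  rw [← Real.sqrt_sq_eq_abs, ← Real.sqrt_mul (sq_nonneg r)]
  congr 1
  rw [Finset.mul_sum]
  refine Finset.sum_congr rfl fun i _ => ?_
  rw [Finset.mul_sum]
  refine Finset.sum_congr rfl fun j _ => ?_
  simp [Matrix.smul_apply, mul_pow]

lemma Ee_apply (i j : Fin 3) : Ee i j = if i = 0 ∧ j = 0 then 1 else 0 := by
  simp [Ee, Matrix.single, Matrix.of_apply, eq_comm]

lemma frob_Ee : frob Ee = 1 := by
  have h : ∀ i j : Fin 3, (Ee i j) ^ 2 = if i = 0 ∧ j = 0 then 1 else 0 := fun i j => by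
    rw [Ee_apply]; split <;> norm_num
  unfold frob
  simp_rw [h]
  rw [Fin.sum_univ_three]
  simp only [Fin.sum_univ_three]
  norm_num [Fin.ext_iff]

lemma frob_smul_Ee (r : ℝ) : frob (r • Ee) = |r| := by
  rw [frob_smul, frob_Ee, mul_one]

lemma smul_Ee_ne_zero {r : ℝ} (hr : r ≠ 0) : r • Ee ≠ 0 := by
  intro h
  have h00 := congr_fun (congr_fun h 0) 0
  rw [Matrix.smul_apply, Ee_apply_00, Matrix.zero_apply, smul_eq_mul, mul_one] at h00
  exact hr h00

/-- Value of `S` along the ray `r • E`. -/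
lemma S_ray {S : Mat3 → Mat3} {U : ℝ → ℝ} (hD : DerivedFrom S U) {r : ℝ} (hr : 0 < r) :
    S (r • Ee) 0 0 = deriv U r := by
  have h := hD.2 (r • Ee)
  rw [symPart_smul_Ee, frob_smul_Ee, abs_of_pos hr] at h
  rw [h, Matrix.smul_apply, Matrix.smul_apply, Ee_apply_00]
  simp only [smul_eq_mul]
  field_simp

/-- The continuous linear map taking a matrix to its `(0,0)` entry. -/
def entryCLM : Mat3 →L[ℝ] ℝ :=
  LinearMap.toContinuousLinearMap
    { toFun := fun M : Mat3 => M 0 0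
      map_add' := fun _ _ => rfl
      map_smul' := fun _ _ => rfl }

lemma entryCLM_apply (M : Mat3) : entryCLM M = M 0 0 := by
  rfl

/-- Derivative of `s ↦ S (s • v) 0 0` at points where `s • v ≠ 0`. -/
lemma hasDerivAt_ray {S : Mat3 → Mat3} {p δ γ₃ γ₄ : ℝ}
    (hS : HasPDeltaStructure S p δ γ₃ γ₄ ) (v : Mat3) (s : ℝ) (hsv : s • v ≠ 0) :
    HasDerivAt (fun s : ℝ => S (s • v) 0 0) (fderiv ℝ S (s • v) v 0 0) s := by
  have hdiff : DifferentiableAt ℝ S (s • v) := by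
    have hopen : IsOpen {P : Mat3 | P ≠ 0} := isOpen_ne
    exact (hS.smooth.contDiffAt (hopen.mem_nhds hsv)).differentiableAt one_ne_zero
  have h1 : HasDerivAt (fun s : ℝ => s • v) v s := by
    have h := (hasDerivAt_id s).smul_const v
    simp only [one_smul] at h
    exact h
  have h2 := hdiff.hasFDerivAt.comp_hasDerivAt s h1
  have h3 := entryCLM.hasFDerivAt.comp_hasDerivAt s h2
  exact h3

/-- The bound on the fderiv entry, in convenient form. -/
lemma fderiv_entry_bound {S : Mat3 → Mat3} {p δ γ₃ γ₄ : ℝ} (hp2 : p ≤ 2) (hδ : 0 < δ)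
    (hS : HasPDeltaStructure S p δ γ₃ γ₄) {r : ℝ} (hr : 0 < r) :
    |fderiv ℝ S (r • Ee) Ee 0 0| ≤ γ₄ * δ ^ (p - 2) := by
  have hne : symPart (r • Ee) ≠ 0 := by
    rw [symPart_smul_Ee]; exact smul_Ee_ne_zero (ne_of_gt hr)
  have hb := hS.bounded (r • Ee) hne 0 0 0 0
  rw [symPart_smul_Ee, frob_smul_Ee, abs_of_pos hr] at hb
  refine le_trans (by exact_mod_cast hb) ?_
  have h1 : δ ^ (p - 2) ≥ (δ + r) ^ (p - 2) :=
    Real.rpow_le_rpow_of_nonpos hδ (by linarith) (by linarith)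
  have hγ : 0 < γ₄ := lt_trans one_pos hS.gamma4_gt
  exact mul_le_mul_of_nonneg_left h1 hγ.le

/-- Bound on `U'`. -/
lemma derivU_bound {S : Mat3 → Mat3} {U : ℝ → ℝ} {p δ γ₃ γ₄ : ℝ} (hp2 : p ≤ 2) (hδ : 0 < δ)
    (hD : DerivedFrom S U) (hS : HasPDeltaStructure S p δ γ₃ γ₄) {t : ℝ} (ht : 0 < t) :
    |deriv U t| ≤ γ₄ * δ ^ (p - 2) * t := by
  set v : Mat3 := t • Ee with hv
  set g : ℝ → ℝ := fun s => S (s • v) 0 0 with hg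
  set C : ℝ := γ₄ * δ ^ (p - 2) * t with hC
  have hsv : ∀ {s : ℝ}, 0 < s → s • v = (s * t) • Ee := by
    intro s _; rw [hv, smul_smul]
  have hder : ∀ s : ℝ, 0 < s →
      HasDerivAt g (fderiv ℝ S (s • v) v 0 0) s := by
    intro s hs
    refine hasDerivAt_ray hS v s ?_
    rw [hsv hs]; exact smul_Ee_ne_zero (ne_of_gt (mul_pos hs ht))
  have hbound : ∀ s : ℝ, 0 < s → |fderiv ℝ S (s • v) v 0 0| ≤ C := by
    intro s hs
    have hlin : fderiv ℝ S (s • v) v = t • fderiv ℝ S (s • v) Ee := by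
      rw [hv, (fderiv ℝ S (s • v)).map_smul]
    rw [hlin, Matrix.smul_apply, smul_eq_mul, abs_mul, abs_of_pos ht]
    rw [hsv hs]
    have := fderiv_entry_bound hp2 hδ hS (mul_pos hs ht)
    rw [hC]
    calc t * |fderiv ℝ S ((s * t) • Ee) Ee 0 0| ≤ t * (γ₄ * δ ^ (p - 2)) :=
          mul_le_mul_of_nonneg_left this ht.le
      _ = γ₄ * δ ^ (p - 2) * t := by ring
  -- mean value inequality on [ε, 1] and limit ε → 0⁺
  have key : ∀ ε : ℝ, ε ∈ Ioo (0:ℝ) 1 → |g 1 - g ε| ≤ C * (1 - ε) := by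
    intro ε hε
    have h := norm_image_sub_le_of_norm_deriv_le_segment'
      (f := g) (f' := fun s => fderiv ℝ S (s • v) v 0 0) (a := ε) (b := 1) (C := C)
      (fun x hx => (hder x (lt_of_lt_of_le hε.1 hx.1)).hasDerivWithinAt)
      (fun x hx => hbound x (lt_of_lt_of_le hε.1 hx.1)) 1 ⟨hε.2.le, le_refl 1⟩
    simpa [Real.norm_eq_abs] using h
  have hg_cont : Continuous g := by
    have h1 : Continuous fun s : ℝ => s • v := continuous_id.smul continuous_const
    have h2 : Continuous fun s : ℝ => S (s • v) := hS.cont.comp h1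
    have h3 : Continuous fun s : ℝ => entryCLM (S (s • v)) := entryCLM.continuous.comp h2
    show Continuous fun s : ℝ => S (s • v) 0 0
    simpa only [entryCLM_apply] using h3
  have hg0 : g 0 = 0 := by
    show S ((0:ℝ) • v) 0 0 = 0
    rw [zero_smul, hS.zero]
    simp
  have hlim : Filter.Tendsto (fun ε : ℝ => C * (1 - ε) + |g ε|)
      (nhdsWithin (0:ℝ) (Set.Ioi 0)) (nhds C) := by
    have hc : Continuous fun ε : ℝ => C * (1 - ε) + |g ε| := by
      exact (continuous_const.mul (continuous_const.sub continuous_id)).add hg_cont.abs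
    have h := hc.continuousAt (x := (0:ℝ)).tendsto
    have heval : C * (1 - 0) + |g 0| = C := by rw [hg0]; simp
    rw [heval] at h
    exact h.mono_left nhdsWithin_le_nhds
  have hev : ∀ᶠ ε in nhdsWithin (0:ℝ) (Set.Ioi 0), |g 1| ≤ C * (1 - ε) + |g ε| := by
    filter_upwards [Ioo_mem_nhdsGT_of_mem (⟨le_refl 0, one_pos⟩ : (0:ℝ) ∈ Set.Ico (0:ℝ) 1)]
      with ε hε
    have hk := key ε hε
    calc |g 1| = |(g 1 - g ε) + g ε| := by ring_nf
      _ ≤ |g 1 - g ε| + |g ε| := abs_add_le _ _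
      _ ≤ C * (1 - ε) + |g ε| := by linarith
  have h1 : |g 1| ≤ C := ge_of_tendsto hlim hev
  have hg1 : g 1 = deriv U t := by
    rw [hg]; simp only [one_smul, hv]; exact S_ray hD ht
  rw [← hg1]; exact h1

/-- Bound on `U''(A)`. -/
lemma deriv2U_bound {S : Mat3 → Mat3} {U : ℝ → ℝ} {p δ γ₃ γ₄ : ℝ} (hp2 : p ≤ 2) (hδ : 0 < δ)
    (hU : IsPotential U) (hD : DerivedFrom S U) (hS : HasPDeltaStructure S p δ γ₃ γ₄)
    {A : ℝ} (hA : 0 < A) : |deriv (deriv U) A| ≤ γ₄ * δ ^ (p - 2) := by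
  set v : Mat3 := A • Ee with hv
  have hvne : (1:ℝ) • v ≠ 0 := by
    rw [one_smul, hv]; exact smul_Ee_ne_zero (ne_of_gt hA)
  have h1 : HasDerivAt (fun s : ℝ => S (s • v) 0 0) (fderiv ℝ S ((1:ℝ) • v) v 0 0) 1 :=
    hasDerivAt_ray hS v 1 hvne
  have h2 : HasDerivAt (fun s : ℝ => deriv U (s * A)) (deriv (deriv U) A * A) 1 := by
    have hid : HasDerivAt (fun s : ℝ => s * A) A 1 := by
      simpa using (hasDerivAt_id (1:ℝ)).mul_const A
    have hg' : HasDerivAt (deriv U) (deriv (deriv U) A) ((1:ℝ) * A) := by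
      rw [one_mul]; exact (hU.diffAt2 A hA).hasDerivAt
    have hcomp := hg'.comp (1:ℝ) hid
    simpa [Function.comp_def] using hcomp
  have h3 : (fun s : ℝ => S (s • v) 0 0) =ᶠ[nhds (1:ℝ)] fun s => deriv U (s * A) := by
    filter_upwards [Ioi_mem_nhds (one_pos : (0:ℝ) < 1)] with s hs
    have hsA : (0:ℝ) < s * A := mul_pos hs hA
    rw [hv, smul_smul]
    exact S_ray hD hsA
  have h4 : HasDerivAt (fun s : ℝ => S (s • v) 0 0) (deriv (deriv U) A * A) 1 :=
    h2.congr_of_eventuallyEq h3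
  have huniq : fderiv ℝ S ((1:ℝ) • v) v 0 0 = deriv (deriv U) A * A := h1.unique h4
  have hlin : fderiv ℝ S ((1:ℝ) • v) v = A • fderiv ℝ S ((1:ℝ) • v) Ee := by
    conv_lhs => rw [hv]
    rw [(fderiv ℝ S ((1:ℝ) • v)).map_smul]
  rw [hlin, Matrix.smul_apply, smul_eq_mul] at huniq
  have hone : (1:ℝ) • v = A • Ee := by rw [one_smul, hv]
  rw [hone] at huniq
  have hbd := fderiv_entry_bound hp2 hδ hS hA
  have hAne : A ≠ 0 := ne_of_gt hA
  have heq : deriv (deriv U) A = fderiv ℝ S (A • Ee) Ee 0 0 := by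
    rw [mul_comm A _] at huniq
    exact (mul_right_cancel₀ hAne huniq).symm
  rw [heq]; exact hbd

/-- Bound on the derivative of the `A`-approximation. -/
lemma deriv_approxA_bound {S : Mat3 → Mat3} {U : ℝ → ℝ} {p δ γ₃ γ₄ : ℝ} (hp2 : p ≤ 2)
    (hδ : 0 < δ) (hU : IsPotential U) (hD : DerivedFrom S U)
    (hS : HasPDeltaStructure S p δ γ₃ γ₄) {A : ℝ} (hA : 1 ≤ A) {t : ℝ} (ht : 0 < t) :
    |deriv (approxA U A) t| ≤ γ₄ * δ ^ (p - 2) * t := by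
  have hA0 : (0:ℝ) < A := lt_of_lt_of_le one_pos hA
  have hδp : (0:ℝ) ≤ δ ^ (p - 2) := Real.rpow_nonneg hδ.le _
  have hγ : (0:ℝ) < γ₄ := lt_trans one_pos hS.gamma4_gt
  set b : ℝ := deriv (deriv U) A with hb
  set a : ℝ := deriv U A with ha
  have hUA : |a| ≤ γ₄ * δ ^ (p - 2) * A := derivU_bound hp2 hδ hD hS hA0
  have hUA2 : |b| ≤ γ₄ * δ ^ (p - 2) := deriv2U_bound hp2 hδ hU hD hS hA0
  have hpoly : ∀ s : ℝ, HasDerivAt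
      (fun t => (1/2) * b * t ^ 2 + (a - b * A) * t + (U A - a * A + (1/2) * b * A ^ 2))
      (b * s + (a - b * A)) s := by
    intro s
    have h1 : HasDerivAt (fun t : ℝ => (1/2) * b * t ^ 2) ((1/2) * b * (2 * s)) s := by
      simpa using (hasDerivAt_pow 2 s).const_mul ((1/2) * b)
    have h2 : HasDerivAt (fun t : ℝ => (a - b * A) * t) (a - b * A) s := by
      simpa using (hasDerivAt_id s).const_mul (a - b * A)
    have := (h1.add h2).add_const (U A - a * A + (1/2) * b * A ^ 2)
    exact this.congr_deriv (by ring)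
  rcases lt_trichotomy t A with h | h | h
  · -- t < A
    have hdeq : deriv (approxA U A) t = deriv U t := by
      apply Filter.EventuallyEq.deriv_eq
      filter_upwards [Iio_mem_nhds h] with s hs
      have hsA : s ≤ A := le_of_lt (Set.mem_Iio.mp hs)
      simp [approxA, hsA]
    rw [hdeq]
    exact derivU_bound hp2 hδ hD hS ht
  · -- t = A
    rw [h]
    have hU_der : HasDerivAt U a A := by
      have := (hU.diffAt A hA0).hasDerivAt
      rwa [← ha] at this
    have hleft : HasDerivWithinAt (approxA U A) a (Set.Iic A) A := by
      refine hU_der.hasDerivWithinAt.congr (fun s hs => ?_) (by simp [approxA])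
      have hsA : s ≤ A := Set.mem_Iic.mp hs
      simp [approxA, hsA]
    have hright : HasDerivWithinAt (approxA U A) a (Set.Ici A) A := by
      have hp2' : HasDerivWithinAt
          (fun t => (1/2) * b * t ^ 2 + (a - b * A) * t + (U A - a * A + (1/2) * b * A ^ 2))
          (b * A + (a - b * A)) (Set.Ici A) A := (hpoly A).hasDerivWithinAt
      have hval : b * A + (a - b * A) = a := by ring
      rw [hval] at hp2'
      refine hp2'.congr (fun s hs => ?_) ?_
      · rcases eq_or_lt_of_le (Set.mem_Ici.mp hs) with rfl | hlt
        · simp only [approxA, le_refl, if_pos]; ring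
        · simp [approxA, not_le.mpr hlt, hb, ha]
      · simp only [approxA, le_refl, if_pos]; ring
    have hfull : HasDerivAt (approxA U A) a A := by
      have := hleft.union hright
      rwa [Set.Iic_union_Ici, hasDerivWithinAt_univ] at this
    rw [hfull.deriv]
    exact hUA
  · -- t > A
    have hdeq : deriv (approxA U A) t = b * t + (a - b * A) := by
      have hd : HasDerivAt (approxA U A) (b * t + (a - b * A)) t := by
        refine (hpoly t).congr_of_eventuallyEq ?_
        filter_upwards [Ioi_mem_nhds h] with s hs
        have hsA : ¬ s ≤ A := not_le.mpr (Set.mem_Ioi.mp hs)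
        simp [approxA, hsA, hb, ha]
      exact hd.deriv
    rw [hdeq]
    have habs : |b * t + (a - b * A)| ≤ |a| + |b| * (t - A) := by
      calc |b * t + (a - b * A)| = |a + b * (t - A)| := by ring_nf
        _ ≤ |a| + |b * (t - A)| := abs_add_le _ _
        _ = |a| + |b| * (t - A) := by rw [abs_mul, abs_of_pos (by linarith : (0:ℝ) < t - A)]
    calc |b * t + (a - b * A)| ≤ |a| + |b| * (t - A) := habs
      _ ≤ γ₄ * δ ^ (p - 2) * A + γ₄ * δ ^ (p - 2) * (t - A) := by
          have := mul_le_mul_of_nonneg_right hUA2 (by linarith : (0:ℝ) ≤ t - A)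
          linarith
      _ = γ₄ * δ ^ (p - 2) * t := by ring

end Stmt9Aux

/-- Let `S = ∂U` have `(p,δ)`-structure with characteristics
`(γ₃,γ₄,p)`, `p ∈ (1,2]`, `δ > 0`, and let `S^A = ∂(U^A)` for `A ≥ 1`. Then there is a
constant `c` depending only on `γ₃, γ₄, p` such that
`|S^A(P)| ≤ c δ^{p−2} |P^sym|` for all `P`. -/
theorem stmt9 (p γ₃ γ₄ : ℝ) (hp : p ∈ Set.Ioc (1:ℝ) 2) :
    ∃ c : ℝ, 0 < c ∧
      ∀ (δ A : ℝ) (U : ℝ → ℝ) (S : Mat3 → Mat3), 0 < δ → 1 ≤ A →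
        IsPotential U → DerivedFrom S U → HasPDeltaStructure S p δ γ₃ γ₄ →
        ∀ P : Mat3, frob (SAop U A P) ≤ c * δ ^ (p - 2) * frob (symPart P) := by
  refine ⟨|γ₄| + 1, by positivity, ?_⟩
  intro δ A U S hδ hA hU hD hS P
  have hp2 : p ≤ 2 := hp.2
  have hγ4 : γ₄ ≤ |γ₄| + 1 := le_trans (le_abs_self _) (by linarith)
  have hδp : (0:ℝ) ≤ δ ^ (p - 2) := Real.rpow_nonneg hδ.le _
  set t := frob (symPart P) with htdef
  have ht0 : 0 ≤ t := Real.sqrt_nonneg _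
  unfold SAop
  rw [← htdef, Stmt9Aux.frob_smul, ← htdef]
  rcases eq_or_lt_of_le ht0 with h | h
  · rw [← h, mul_zero, mul_zero]
  · rw [abs_div, abs_of_pos h, div_mul_cancel₀ _ (ne_of_gt h)]
    calc |deriv (approxA U A) t| ≤ γ₄ * δ ^ (p - 2) * t :=
          Stmt9Aux.deriv_approxA_bound hp2 hδ hU hD hS hA h
      _ ≤ (|γ₄| + 1) * δ ^ (p - 2) * t := by
          apply mul_le_mul_of_nonneg_right _ ht0
          exact mul_le_mul_of_nonneg_right hγ4 hδp

end
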